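/- On the open set U = {(x,y,s,t) ∈ ℝ⁴ : x > |y| > 0}, with ω₊ and ω₋ the ambitoric Kähler forms ω₊ = (dx∧(ds+y²dt) + dy∧(ds+x²dt))/(x+y)² and ω₋ = (dx∧(ds+y²dt) - dy∧(ds+x²dt))/(x-y)², the vector fields K₁ = ∂/∂s and K₂ = ∂/∂t are Hamiltonian: K₁⌟ω₊ = d(1/(x+y)), K₁⌟ω₋ = d(1/(x-y)), K₂⌟ω₊ = -d(xy/(x+y)), and K₂⌟ω₋ = d(xy/(x-y)). -/
import Mathlib


/-!
STATEMENT 12: On U = {(x,y,s,t) ∈ ℝ⁴ : x > |y| > 0}, with the ambitoric Kähler forms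
ω₊ = (dx∧(ds+y²dt) + dy∧(ds+x²dt))/(x+y)² and ω₋ = (dx∧(ds+y²dt) - dy∧(ds+x²dt))/(x-y)²,
the vector fields K₁ = ∂/∂s and K₂ = ∂/∂t are Hamiltonian:
K₁⌟ω₊ = d(1/(x+y)), K₁⌟ω₋ = d(1/(x-y)), K₂⌟ω₊ = -d(xy/(x+y)), K₂⌟ω₋ = d(xy/(x-y)).

2-forms are represented by antisymmetric component matrices (coordinates 0=x, 1=y, 2=s,
3=t); the interior product of the coordinate field ∂/∂s (resp. ∂/∂t) into ω has
components (K⌟ω)_j = ω_{2j} (resp. ω_{3j}), and d of a function has components `pd j`.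
-/

noncomputable section

def pd (i : Fin 4) (f : (Fin 4 → ℝ) → ℝ) (p : Fin 4 → ℝ) : ℝ :=
  fderiv ℝ f p (Pi.single i 1)

def U4 : Set (Fin 4 → ℝ) := {p | |p 1| < p 0 ∧ 0 < |p 1|}

def omegaP (p : Fin 4 → ℝ) : Matrix (Fin 4) (Fin 4) ℝ :=
  !![0, 0, 1/(p 0 + p 1)^2, (p 1)^2/(p 0 + p 1)^2;
     0, 0, 1/(p 0 + p 1)^2, (p 0)^2/(p 0 + p 1)^2;
     -(1/(p 0 + p 1)^2), -(1/(p 0 + p 1)^2), 0, 0;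
     -((p 1)^2/(p 0 + p 1)^2), -((p 0)^2/(p 0 + p 1)^2), 0, 0]

def omegaM (p : Fin 4 → ℝ) : Matrix (Fin 4) (Fin 4) ℝ :=
  !![0, 0, 1/(p 0 - p 1)^2, (p 1)^2/(p 0 - p 1)^2;
     0, 0, -(1/(p 0 - p 1)^2), -((p 0)^2/(p 0 - p 1)^2);
     -(1/(p 0 - p 1)^2), 1/(p 0 - p 1)^2, 0, 0;
     -((p 1)^2/(p 0 - p 1)^2), (p 0)^2/(p 0 - p 1)^2, 0, 0]

theorem stmt12 :
    (∀ p ∈ U4, ∀ j : Fin 4,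
      omegaP p 2 j = pd j (fun q => 1/(q 0 + q 1)) p) ∧
    (∀ p ∈ U4, ∀ j : Fin 4,
      omegaM p 2 j = pd j (fun q => 1/(q 0 - q 1)) p) ∧
    (∀ p ∈ U4, ∀ j : Fin 4,
      omegaP p 3 j = -pd j (fun q => q 0 * q 1/(q 0 + q 1)) p) ∧
    (∀ p ∈ U4, ∀ j : Fin 4,
      omegaM p 3 j = pd j (fun q => q 0 * q 1/(q 0 - q 1)) p) := by
  have hx : ∀ p : Fin 4 → ℝ, HasFDerivAt (fun q : Fin 4 → ℝ => q 0)
      (ContinuousLinearMap.proj (R := ℝ) (φ := fun _ : Fin 4 => ℝ) 0) p :=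
    fun p => hasFDerivAt_apply 0 p
  have hy : ∀ p : Fin 4 → ℝ, HasFDerivAt (fun q : Fin 4 → ℝ => q 1)
      (ContinuousLinearMap.proj (R := ℝ) (φ := fun _ : Fin 4 => ℝ) 1) p :=
    fun p => hasFDerivAt_apply 1 p
  refine ⟨?_, ?_, ?_, ?_⟩ <;> intro p hp j <;>
    obtain ⟨h1, h2⟩ := abs_lt.mp hp.1
  · have hne : p 0 + p 1 ≠ 0 := by linarith
    have H : HasFDerivAt (fun q : Fin 4 → ℝ => (q 0 + q 1)⁻¹)
        (((1 : ℝ →L[ℝ] ℝ).smulRight (-((p 0 + p 1) ^ 2)⁻¹)).comp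
          (ContinuousLinearMap.proj (R := ℝ) (φ := fun _ : Fin 4 => ℝ) 0 + ContinuousLinearMap.proj 1)) p :=
      (hasFDerivAt_inv hne).comp p ((hx p).add (hy p))
    simp only [one_div, pd, H.fderiv]
    fin_cases j <;>
      simp [omegaP, Pi.single_apply, Matrix.vecHead, Matrix.vecTail, Function.comp] <;>
        first
        | rfl
        | (field_simp; ring)
  · have hne : p 0 - p 1 ≠ 0 := by linarith
    have H : HasFDerivAt (fun q : Fin 4 → ℝ => (q 0 - q 1)⁻¹)
        (((1 : ℝ →L[ℝ] ℝ).smulRight (-((p 0 - p 1) ^ 2)⁻¹)).comp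
          (ContinuousLinearMap.proj (R := ℝ) (φ := fun _ : Fin 4 => ℝ) 0 - ContinuousLinearMap.proj 1)) p :=
      (hasFDerivAt_inv hne).comp p ((hx p).sub (hy p))
    simp only [one_div, pd, H.fderiv]
    fin_cases j <;>
      simp [omegaM, Pi.single_apply, Matrix.vecHead, Matrix.vecTail, Function.comp] <;>
        first
        | rfl
        | (field_simp; ring)
  · have hne : p 0 + p 1 ≠ 0 := by linarith
    have H : HasFDerivAt (fun q : Fin 4 → ℝ => q 0 * q 1 * (q 0 + q 1)⁻¹)
        ((p 0 * p 1) •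
          (((1 : ℝ →L[ℝ] ℝ).smulRight (-((p 0 + p 1) ^ 2)⁻¹)).comp
            (ContinuousLinearMap.proj (R := ℝ) (φ := fun _ : Fin 4 => ℝ) 0 +
              ContinuousLinearMap.proj 1)) +
          (p 0 + p 1)⁻¹ • (p 0 • ContinuousLinearMap.proj 1 + p 1 • ContinuousLinearMap.proj 0)) p :=
      ((hx p).mul (hy p)).mul ((hasFDerivAt_inv hne).comp p ((hx p).add (hy p)))
    simp only [div_eq_mul_inv, pd, H.fderiv]
    fin_cases j <;>
      simp [omegaP, Pi.single_apply, Matrix.vecHead, Matrix.vecTail, Function.comp] <;>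
        first
        | rfl
        | (field_simp; ring)
  · have hne : p 0 - p 1 ≠ 0 := by linarith
    have H : HasFDerivAt (fun q : Fin 4 → ℝ => q 0 * q 1 * (q 0 - q 1)⁻¹)
        ((p 0 * p 1) •
          (((1 : ℝ →L[ℝ] ℝ).smulRight (-((p 0 - p 1) ^ 2)⁻¹)).comp
            (ContinuousLinearMap.proj (R := ℝ) (φ := fun _ : Fin 4 => ℝ) 0 -
              ContinuousLinearMap.proj 1)) +
          (p 0 - p 1)⁻¹ • (p 0 • ContinuousLinearMap.proj 1 + p 1 • ContinuousLinearMap.proj 0)) p :=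
      ((hx p).mul (hy p)).mul ((hasFDerivAt_inv hne).comp p ((hx p).sub (hy p)))
    simp only [div_eq_mul_inv, pd, H.fderiv]
    fin_cases j <;>
      simp [omegaM, Pi.single_apply, Matrix.vecHead, Matrix.vecTail, Function.comp] <;>
        first
        | rfl
        | (field_simp; ring)

end
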